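/- Correctness of project-join tree evaluation: for a CNF formula φ over X, a project-join tree (T, r, γ, π) of φ, and a literal-weight function W over X, the root valuation evaluated at the empty assignment equals the weighted model count: f^W_r(∅) = W(φ) = Σ_{τ ⊆ X} φ(τ)·W(τ). -/

import Mathlib

variable {V : Type*} [DecidableEq V]

structure Clause (V : Type*) where
  pos : Finset V
  neg : Finset V

def Clause.vars [DecidableEq V] (c : Clause V) : Finset V := c.pos ∪ c.neg

noncomputable def Clause.ind [DecidableEq V] (c : Clause V) (τ : Finset V) : ℝ :=
  if (∃ x ∈ c.pos, x ∈ τ) ∨ (∃ x ∈ c.neg, x ∉ τ) then 1 else 0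

inductive PJT (V : Type*) where
  | leaf (c : Clause V)
  | node (lbl : Finset V) (children : List (PJT V))

namespace PJT

def clauses : PJT V → Multiset (Clause V)
  | .leaf c => {c}
  | .node _ cs => (cs.attach.map (fun o => clauses o.1)).sum
decreasing_by
  have := List.sizeOf_lt_of_mem o.2
  simp only [PJT.node.sizeOf_spec]
  omega

def labels : PJT V → Multiset (Finset V)
  | .leaf _ => 0
  | .node lbl cs => lbl ::ₘ (cs.attach.map (fun o => labels o.1)).sum
decreasing_by
  have := List.sizeOf_lt_of_mem o.2
  simp only [PJT.node.sizeOf_spec]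
  omega

def P : PJT V → Finset V
  | .leaf _ => ∅
  | .node lbl cs => lbl ∪ (cs.attach.map (fun o => P o.1)).foldr (· ∪ ·) ∅
decreasing_by
  have := List.sizeOf_lt_of_mem o.2
  simp only [PJT.node.sizeOf_spec]
  omega

def varsOf : PJT V → Finset V
  | .leaf c => c.vars
  | .node lbl cs => (cs.attach.map (fun o => varsOf o.1)).foldr (· ∪ ·) ∅ \ lbl
decreasing_by
  have := List.sizeOf_lt_of_mem o.2
  simp only [PJT.node.sizeOf_spec]
  omega

def size : PJT V → ℕ
  | .leaf c => c.vars.card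
  | .node lbl cs => (varsOf (.node lbl cs) ∪ lbl).card

def width : PJT V → ℕ
  | .leaf c => c.vars.card
  | .node lbl cs =>
      max (size (.node lbl cs)) ((cs.attach.map (fun o => width o.1)).foldr max 0)
decreasing_by
  have := List.sizeOf_lt_of_mem o.2
  simp only [PJT.node.sizeOf_spec]
  omega

def wProd (W : V → Bool → ℝ) (S : Finset V) (τ : Finset V) : ℝ :=
  ∏ x ∈ S, W x (decide (x ∈ τ))

noncomputable def val (W : V → Bool → ℝ) : PJT V → Finset V → ℝ
  | .leaf c => c.ind
  | .node lbl cs => fun τ =>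
      ∑ σ ∈ lbl.powerset,
        (cs.attach.map (fun o => val W o.1 ((τ ∪ σ) ∩ varsOf o.1))).prod
          * wProd W lbl (τ ∪ σ)
decreasing_by
  have := List.sizeOf_lt_of_mem o.2
  simp only [PJT.node.sizeOf_spec]
  omega

inductive Subtree : PJT V → PJT V → Prop
  | refl (t : PJT V) : Subtree t t
  | child {s c : PJT V} {lbl : Finset V} {cs : List (PJT V)} :
      c ∈ cs → Subtree s c → Subtree s (.node lbl cs)

end PJT

def Formula.vars (φ : Finset (Clause V)) : Finset V := φ.sup Clause.vars

def clausesVars (M : Multiset (Clause V)) : Finset V := (M.map Clause.vars).sup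

structure IsPJT (φ : Finset (Clause V)) (t : PJT V) : Prop where
  clauses_eq : t.clauses = φ.val
  cover : t.P = Formula.vars φ
  disjoint_labels : (t.labels.map Finset.card).sum = (Formula.vars φ).card
  descend : ∀ lbl cs, PJT.Subtree (.node lbl cs) t →
    ∀ c ∈ φ, ∀ x ∈ lbl, x ∈ c.vars → c ∈ PJT.clauses (.node lbl cs)


section Aux
variable {α : Type*} {β : Type*} {γ : Type*}

lemma aux_le_sum (l : List α) (f : α → Multiset β) {a : α} (ha : a ∈ l) :
    f a ≤ (l.map f).sum := by
  induction l with
  | nil => simp at ha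
  | cons b l ih =>
    rcases List.mem_cons.1 ha with h | h
    · subst h; simpa using Multiset.le_add_right _ _
    · simp only [List.map_cons, List.sum_cons]
      exact le_trans (ih h) (Multiset.le_add_left _ _)

lemma aux_two_le_sum (l : List α) (f : α → Multiset β) {a b : α} (ha : a ∈ l) (hb : b ∈ l)
    (hab : a ≠ b) : f a + f b ≤ (l.map f).sum := by
  induction l with
  | nil => simp at ha
  | cons c l ih =>
    simp only [List.map_cons, List.sum_cons]
    rcases List.mem_cons.1 ha with h | h
    · subst h
      have hb' : b ∈ l := by
        rcases List.mem_cons.1 hb with h2 | h2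
        · exact absurd h2.symm hab
        · exact h2
      exact add_le_add_right (aux_le_sum l f hb') _
    · rcases List.mem_cons.1 hb with h2 | h2
      · subst h2
        calc f a + f b ≤ (l.map f).sum + f b := add_le_add_left (aux_le_sum l f h) _
        _ = f b + (l.map f).sum := add_comm _ _
      · exact le_trans (ih h h2) (Multiset.le_add_left _ _)

lemma aux_pairwise_sum (l : List α) (f : α → Multiset β) :
    l.Pairwise (fun a b => f a + f b ≤ (l.map f).sum) := by
  induction l with
  | nil => exact List.Pairwise.nil
  | cons a l ih =>
    refine List.Pairwise.cons ?_ (ih.imp ?_)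
    · intro b hb
      simp only [List.map_cons, List.sum_cons]
      exact add_le_add_right (aux_le_sum l f hb) _
    · intro x y h
      simp only [List.map_cons, List.sum_cons]
      exact le_trans h (Multiset.le_add_left _ _)

variable {V : Type*} [DecidableEq V]

lemma mem_foldr_union (l : List α) (f : α → Finset V) (x : V) :
    x ∈ (l.map f).foldr (· ∪ ·) ∅ ↔ ∃ a ∈ l, x ∈ f a := by
  induction l with
  | nil => simp
  | cons a l ih => simp [ih]

lemma mem_listsum (l : List α) (f : α → Multiset β) (c : β) :
    c ∈ (l.map f).sum ↔ ∃ a ∈ l, c ∈ f a := by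
  induction l with
  | nil => simp
  | cons a l ih => simp [ih]

lemma msup_card_le (M : Multiset (Finset V)) :
    M.sup.card ≤ (M.map Finset.card).sum := by
  induction M using Multiset.induction with
  | empty => simp
  | cons a M ih =>
    simp only [Multiset.sup_cons, Multiset.map_cons, Multiset.sum_cons]
    calc (a ⊔ M.sup).card ≤ a.card + M.sup.card := Finset.card_union_le _ _
    _ ≤ a.card + (M.map Finset.card).sum := by omega

lemma disj_of_card (M : Multiset (Finset V)) (h : (M.map Finset.card).sum ≤ M.sup.card) :
    ∀ A B : Finset V, A ::ₘ {B} ≤ M → Disjoint A B := by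
  intro A B hAB
  obtain ⟨R, hR⟩ := Multiset.le_iff_exists_add.1 hAB
  have hM : M = A ::ₘ B ::ₘ R := by
    rw [hR]
    simp [Multiset.singleton_add]
  subst hM
  set X := (B ::ₘ R).sup with hX
  have hBX : B ⊆ X := Multiset.le_sup (Multiset.mem_cons_self _ _)
  have h1 : X.card ≤ B.card + (R.map Finset.card).sum := by
    have := msup_card_le (B ::ₘ R)
    simp only [Multiset.sup_cons, Multiset.map_cons, Multiset.sum_cons] at this
    simpa [hX] using this
  have h2 : (A ⊔ X).card ≤ A.card + X.card := Finset.card_union_le _ _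
  have h3 : A.card + B.card + (R.map Finset.card).sum ≤ (A ⊔ X).card := by
    simpa [hX, add_assoc] using h
  have hcard : (A ∪ X).card = A.card + X.card := by
    change (A ⊔ X).card = _ at *
    omega
  have hd : Disjoint A X := by
    have := Finset.card_union_add_card_inter A X
    have hint : (A ∩ X).card = 0 := by omega
    rw [Finset.card_eq_zero] at hint
    exact Finset.disjoint_iff_inter_eq_empty.2 hint
  exact hd.mono_right hBX

end Aux
section Structural
variable {V : Type*} [DecidableEq V]
open PJT

theorem pjt_strong_ind {motive : PJT V → Prop}
    (h : ∀ t, (∀ s : PJT V, sizeOf s < sizeOf t → motive s) → motive t) (t : PJT V) :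
    motive t := by
  have key : ∀ n, ∀ t : PJT V, sizeOf t < n → motive t := by
    intro n
    induction n with
    | zero => intro t ht; omega
    | succ n ih => intro t _; exact h t (fun s hs => ih s (by omega))
  exact key (sizeOf t + 1) t (by omega)

lemma sizeOf_child {lbl : Finset V} {cs : List (PJT V)} {o : PJT V} (h : o ∈ cs) :
    sizeOf o < sizeOf (PJT.node lbl cs) := by
  have := List.sizeOf_lt_of_mem h
  simp only [PJT.node.sizeOf_spec]
  omega

lemma subtree_trans {a b c : PJT V} (hab : Subtree a b) (hbc : Subtree b c) : Subtree a c := by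
  induction hbc with
  | refl => exact hab
  | child hmem _ ih => exact .child hmem ih

lemma clauses_le_of_subtree {s t : PJT V} (h : Subtree s t) : clauses s ≤ clauses t := by
  induction h with
  | refl => exact le_refl _
  | @child c lbl cs hmem _ ih =>
    refine le_trans ih ?_
    rw [show clauses (.node lbl cs) = (cs.attach.map (fun o => clauses o.1)).sum from by rw [clauses]]
    exact aux_le_sum _ _ (List.mem_attach cs ⟨c, hmem⟩)

lemma labels_le_of_subtree {s t : PJT V} (h : Subtree s t) : labels s ≤ labels t := by
  induction h with
  | refl => exact le_refl _
  | @child c lbl cs hmem _ ih =>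
    refine le_trans ih ?_
    rw [show labels (.node lbl cs) = lbl ::ₘ (cs.attach.map (fun o => labels o.1)).sum from by rw [labels]]
    exact le_trans (aux_le_sum cs.attach (fun o => labels o.1) (List.mem_attach cs ⟨c, hmem⟩)) (Multiset.le_cons_self _ _)

lemma P_subset_of_subtree {s t : PJT V} (h : Subtree s t) : P s ⊆ P t := by
  induction h with
  | refl => exact subset_rfl
  | @child c lbl cs hmem _ ih =>
    refine subset_trans ih ?_
    rw [show P (.node lbl cs) = lbl ∪ (cs.attach.map (fun o => P o.1)).foldr (· ∪ ·) ∅ from by rw [P]]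
    intro x hx
    refine Finset.mem_union_right _ ?_
    exact (mem_foldr_union _ _ x).2 ⟨⟨c, hmem⟩, List.mem_attach _ _, hx⟩

lemma clause_vars_subset {s : PJT V} : ∀ c ∈ clauses s, c.vars ⊆ varsOf s ∪ P s := by
  induction s using pjt_strong_ind with
  | h t ih =>
    match t with
    | .leaf c' =>
      intro c hc
      rw [show clauses (.leaf c') = {c'} from by rw [clauses]] at hc
      rw [Multiset.mem_singleton] at hc
      subst hc
      rw [show varsOf (.leaf c) = c.vars from by rw [varsOf]]
      exact Finset.subset_union_left
    | .node lbl cs =>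
      intro c hc
      rw [show clauses (.node lbl cs) = (cs.attach.map (fun o => clauses o.1)).sum from by rw [clauses]] at hc
      obtain ⟨o, _, hco⟩ := (mem_listsum _ _ _).1 hc
      have hsub := ih o.1 (sizeOf_child o.2) c hco
      intro x hx
      have hx' := hsub hx
      rw [show varsOf (.node lbl cs) = (cs.attach.map (fun o => varsOf o.1)).foldr (· ∪ ·) ∅ \ lbl from by rw [varsOf]]
      rw [show P (.node lbl cs) = lbl ∪ (cs.attach.map (fun o => P o.1)).foldr (· ∪ ·) ∅ from by rw [P]]
      rcases Finset.mem_union.1 hx' with h1 | h1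
      · by_cases hl : x ∈ lbl
        · exact Finset.mem_union_right _ (Finset.mem_union_left _ hl)
        · refine Finset.mem_union_left _ (Finset.mem_sdiff.2 ⟨?_, hl⟩)
          exact (mem_foldr_union _ _ x).2 ⟨o, List.mem_attach _ _, h1⟩
      · refine Finset.mem_union_right _ (Finset.mem_union_right _ ?_)
        exact (mem_foldr_union _ _ x).2 ⟨o, List.mem_attach _ _, h1⟩

lemma varsOf_mem_clause {s : PJT V} : ∀ x ∈ varsOf s, ∃ c ∈ clauses s, x ∈ c.vars := by
  induction s using pjt_strong_ind with
  | h t ih =>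
    match t with
    | .leaf c' =>
      intro x hx
      rw [show varsOf (.leaf c') = c'.vars from by rw [varsOf]] at hx
      exact ⟨c', by rw [show clauses (.leaf c') = {c'} from by rw [clauses]]; simp, hx⟩
    | .node lbl cs =>
      intro x hx
      rw [show varsOf (.node lbl cs) = (cs.attach.map (fun o => varsOf o.1)).foldr (· ∪ ·) ∅ \ lbl from by rw [varsOf]] at hx
      obtain ⟨o, _, hxo⟩ := (mem_foldr_union _ _ x).1 (Finset.mem_sdiff.1 hx).1
      obtain ⟨c, hc, hxc⟩ := ih o.1 (sizeOf_child o.2) x hxo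
      refine ⟨c, ?_, hxc⟩
      rw [show clauses (.node lbl cs) = (cs.attach.map (fun o => clauses o.1)).sum from by rw [clauses]]
      exact (mem_listsum _ _ _).2 ⟨o, List.mem_attach _ _, hc⟩

lemma P_mem_label {s : PJT V} : ∀ x ∈ P s, ∃ lbl cs, Subtree (.node lbl cs) s ∧ x ∈ lbl := by
  induction s using pjt_strong_ind with
  | h t ih =>
    match t with
    | .leaf c' =>
      intro x hx
      rw [show P (.leaf c' : PJT V) = ∅ from by rw [P]] at hx
      simp at hx
    | .node lbl cs =>
      intro x hx
      rw [show P (.node lbl cs) = lbl ∪ (cs.attach.map (fun o => P o.1)).foldr (· ∪ ·) ∅ from by rw [P]] at hx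
      rcases Finset.mem_union.1 hx with h1 | h1
      · exact ⟨lbl, cs, .refl _, h1⟩
      · obtain ⟨o, _, hxo⟩ := (mem_foldr_union _ _ x).1 h1
        obtain ⟨lbl', cs', hsub, hxl⟩ := ih o.1 (sizeOf_child o.2) x hxo
        exact ⟨lbl', cs', subtree_trans hsub (.child o.2 (.refl _)), hxl⟩

lemma label_mem_labels {s : PJT V} {lbl : Finset V} {cs : List (PJT V)}
    (h : Subtree (.node lbl cs) s) : lbl ∈ labels s := by
  have := labels_le_of_subtree h
  refine Multiset.mem_of_le this ?_
  rw [show labels (.node lbl cs) = lbl ::ₘ (cs.attach.map (fun o => labels o.1)).sum from by rw [labels]]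
  exact Multiset.mem_cons_self _ _

lemma sup_listsum (l : List α) (g : α → Multiset (Finset V)) :
    ((l.map g).sum).sup = (l.map (fun a => (g a).sup)).foldr (· ∪ ·) ∅ := by
  induction l with
  | nil => simp [Multiset.sup_zero]
  | cons a l ih => simp [Multiset.sup_add, ih, Finset.sup_eq_union]

lemma P_eq_sup_labels {s : PJT V} : P s = (labels s).sup := by
  induction s using pjt_strong_ind with
  | h t ih =>
    match t with
    | .leaf c' =>
      rw [show P (.leaf c' : PJT V) = ∅ from by rw [P]]
      rw [show labels (.leaf c' : PJT V) = 0 from by rw [labels]]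
      simp
    | .node lbl cs =>
      rw [show P (.node lbl cs) = lbl ∪ (cs.attach.map (fun o => P o.1)).foldr (· ∪ ·) ∅ from by rw [P]]
      rw [show labels (.node lbl cs) = lbl ::ₘ (cs.attach.map (fun o => labels o.1)).sum from by rw [labels]]
      rw [Multiset.sup_cons, sup_listsum]
      rw [Finset.sup_eq_union]
      congr 1
      ext x
      rw [mem_foldr_union, mem_foldr_union]
      constructor
      · rintro ⟨o, ho, hx⟩
        exact ⟨o, ho, by rwa [← ih o.1 (sizeOf_child o.2)]⟩
      · rintro ⟨o, ho, hx⟩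
        exact ⟨o, ho, by rwa [ih o.1 (sizeOf_child o.2)]⟩

end Structural
section Combinatorial
variable {V : Type*} [DecidableEq V] {α : Type*} {β : Type*}
open PJT

lemma ind_congr (c : Clause V) {τ₁ τ₂ : Finset V} (h : ∀ x ∈ c.vars, (x ∈ τ₁ ↔ x ∈ τ₂)) :
    c.ind τ₁ = c.ind τ₂ := by
  unfold Clause.ind
  have hcond : ((∃ x ∈ c.pos, x ∈ τ₁) ∨ (∃ x ∈ c.neg, x ∉ τ₁)) ↔
      ((∃ x ∈ c.pos, x ∈ τ₂) ∨ (∃ x ∈ c.neg, x ∉ τ₂)) := by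
    constructor
    · rintro (⟨x, hx, hm⟩ | ⟨x, hx, hm⟩)
      · exact Or.inl ⟨x, hx, (h x (Finset.mem_union_left _ hx)).1 hm⟩
      · exact Or.inr ⟨x, hx, fun hm2 => hm ((h x (Finset.mem_union_right _ hx)).2 hm2)⟩
    · rintro (⟨x, hx, hm⟩ | ⟨x, hx, hm⟩)
      · exact Or.inl ⟨x, hx, (h x (Finset.mem_union_left _ hx)).2 hm⟩
      · exact Or.inr ⟨x, hx, fun hm2 => hm ((h x (Finset.mem_union_right _ hx)).1 hm2)⟩
  exact if_congr hcond rfl rfl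

lemma wProd_congr (W : V → Bool → ℝ) {S τ₁ τ₂ : Finset V} (h : ∀ x ∈ S, (x ∈ τ₁ ↔ x ∈ τ₂)) :
    wProd W S τ₁ = wProd W S τ₂ := by
  unfold wProd
  exact Finset.prod_congr rfl (fun x hx => by rw [decide_eq_decide.2 (h x hx)])

lemma wProd_union (W : V → Bool → ℝ) {A B : Finset V} (hd : Disjoint A B) (τ : Finset V) :
    wProd W (A ∪ B) τ = wProd W A τ * wProd W B τ := by
  unfold wProd
  exact Finset.prod_union hd

lemma union_inter_cancel_left {σ β A : Finset V} (hσ : σ ⊆ A) (hd : Disjoint β A) :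
    (σ ∪ β) ∩ A = σ := by
  ext x
  simp only [Finset.mem_inter, Finset.mem_union]
  constructor
  · rintro ⟨h1 | h1, h2⟩
    · exact h1
    · exact absurd h2 (Finset.disjoint_left.1 hd h1)
  · intro h
    exact ⟨Or.inl h, hσ h⟩

lemma union_inter_cancel_right {σ β A : Finset V} (hβ : β ⊆ A) (hd : Disjoint σ A) :
    (σ ∪ β) ∩ A = β := by
  rw [Finset.union_comm]
  exact union_inter_cancel_left hβ hd

lemma sum_powerset_union (F : Finset V → ℝ) {A B : Finset V} (hd : Disjoint A B) :
    ∑ ρ ∈ (A ∪ B).powerset, F ρ = ∑ σ ∈ A.powerset, ∑ β ∈ B.powerset, F (σ ∪ β) := by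
  rw [← Finset.sum_product']
  refine Finset.sum_nbij' (fun ρ => (ρ ∩ A, ρ ∩ B)) (fun p => p.1 ∪ p.2) ?_ ?_ ?_ ?_ ?_
  · intro ρ hρ
    simp only [Finset.mem_product, Finset.mem_powerset]
    exact ⟨Finset.inter_subset_right, Finset.inter_subset_right⟩
  · intro p hp
    simp only [Finset.mem_product, Finset.mem_powerset] at hp ⊢
    exact Finset.union_subset_union hp.1 hp.2
  · intro ρ hρ
    simp only [Finset.mem_powerset] at hρ
    show ρ ∩ A ∪ ρ ∩ B = ρ
    rw [← Finset.inter_union_distrib_left, Finset.inter_eq_left.2 hρ]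
  · intro p hp
    simp only [Finset.mem_product, Finset.mem_powerset] at hp
    obtain ⟨h1, h2⟩ := hp
    show ((p.1 ∪ p.2) ∩ A, (p.1 ∪ p.2) ∩ B) = p
    have e1 : (p.1 ∪ p.2) ∩ A = p.1 :=
      union_inter_cancel_left h1 (hd.symm.mono_left h2)
    have e2 : (p.1 ∪ p.2) ∩ B = p.2 :=
      union_inter_cancel_right h2 (hd.mono_left h1)
    rw [e1, e2]
  · intro ρ hρ
    simp only [Finset.mem_powerset] at hρ
    show F ρ = F (ρ ∩ A ∪ ρ ∩ B)
    rw [← Finset.inter_union_distrib_left, Finset.inter_eq_left.2 hρ]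

lemma prod_sum_powerset (L : List α) (S : α → Finset V) (f : α → Finset V → ℝ)
    (hpw : L.Pairwise (fun a b => Disjoint (S a) (S b))) :
    (L.map (fun a => ∑ σ ∈ (S a).powerset, f a σ)).prod
      = ∑ ρ ∈ ((L.map S).foldr (· ∪ ·) ∅).powerset, (L.map (fun a => f a (ρ ∩ S a))).prod := by
  induction L with
  | nil => simp
  | cons a L ih =>
    have hpwt := hpw.of_cons
    have hhead : ∀ b ∈ L, Disjoint (S a) (S b) := fun b hb => (List.pairwise_cons.1 hpw).1 b hb
    have hdU : Disjoint (S a) ((L.map S).foldr (· ∪ ·) ∅) := by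
      rw [Finset.disjoint_left]
      intro x hx hx2
      obtain ⟨b, hb, hxb⟩ := (mem_foldr_union _ _ x).1 hx2
      exact Finset.disjoint_left.1 (hhead b hb) hx hxb
    simp only [List.map_cons, List.prod_cons, List.foldr_cons]
    rw [sum_powerset_union _ hdU, ih hpwt, Finset.sum_mul_sum]
    refine Finset.sum_congr rfl (fun σ hσ => Finset.sum_congr rfl (fun β hβ => ?_))
    simp only [Finset.mem_powerset] at hσ hβ
    have e1 : (σ ∪ β) ∩ S a = σ :=
      union_inter_cancel_left hσ ((hdU.mono_right hβ).symm)
    rw [e1]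
    congr 1
    refine congrArg List.prod (List.map_congr_left (fun b hb => ?_))
    have e2 : (σ ∪ β) ∩ S b = β ∩ S b := by
      ext x
      simp only [Finset.mem_inter, Finset.mem_union]
      constructor
      · rintro ⟨h1 | h1, h2⟩
        · exact absurd h2 (Finset.disjoint_left.1 ((hhead b hb).mono_left hσ) h1)
        · exact ⟨h1, h2⟩
      · rintro ⟨h1, h2⟩
        exact ⟨Or.inr h1, h2⟩
    rw [e2]

lemma listsum_map_prod (l : List α) (g : α → Multiset β) (f : β → ℝ) :
    (((l.map g).sum).map f).prod = (l.map (fun a => ((g a).map f).prod)).prod := by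
  induction l with
  | nil => simp
  | cons a l ih => simp [ih]

lemma wProd_foldr (W : V → Bool → ℝ) (L : List α) (S : α → Finset V) (τ : Finset V)
    (hpw : L.Pairwise (fun a b => Disjoint (S a) (S b))) :
    (L.map (fun a => wProd W (S a) τ)).prod = wProd W ((L.map S).foldr (· ∪ ·) ∅) τ := by
  induction L with
  | nil => simp [wProd]
  | cons a L ih =>
    have hdU : Disjoint (S a) ((L.map S).foldr (· ∪ ·) ∅) := by
      rw [Finset.disjoint_left]
      intro x hx hx2
      obtain ⟨b, hb, hxb⟩ := (mem_foldr_union _ _ x).1 hx2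
      exact Finset.disjoint_left.1 ((List.pairwise_cons.1 hpw).1 b hb) hx hxb
    simp only [List.map_cons, List.prod_cons, List.foldr_cons]
    rw [wProd_union W hdU, ih hpw.of_cons]

lemma mem_two_not_nodup {M N T : Multiset β} (h : M + N ≤ T) (hT : T.Nodup) {c : β}
    (hM : c ∈ M) (hN : c ∈ N) : False := by
  classical
  have h1 : (1 : ℕ) ≤ M.count c := Multiset.one_le_count_iff_mem.2 hM
  have h2 : (1 : ℕ) ≤ N.count c := Multiset.one_le_count_iff_mem.2 hN
  have h3 : (M + N).count c ≤ T.count c := Multiset.count_le_of_le c h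
  rw [Multiset.count_add] at h3
  have h4 : T.count c ≤ 1 := Multiset.nodup_iff_count_le_one.1 hT c
  omega

end Combinatorial
section Separation
variable {V : Type*} [DecidableEq V]
open PJT

lemma key_contain {φ : Finset (Clause V)} {t₀ : PJT V}
    (hdesc : ∀ lbl cs, Subtree (.node lbl cs) t₀ →
      ∀ c ∈ φ, ∀ x ∈ lbl, x ∈ c.vars → c ∈ PJT.clauses (.node lbl cs))
    {s : PJT V} (hs : Subtree s t₀) {x : V} (hx : x ∈ P s) {c : Clause V} (hc : c ∈ φ)
    (hxc : x ∈ c.vars) : c ∈ clauses s := by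
  obtain ⟨lbl, cs, hsub, hxl⟩ := P_mem_label x hx
  exact Multiset.mem_of_le (clauses_le_of_subtree hsub)
    (hdesc lbl cs (subtree_trans hsub hs) c hc x hxl hxc)

lemma clause_mem_phi {φ : Finset (Clause V)} {t₀ : PJT V} (hcl : clauses t₀ = φ.val)
    {s : PJT V} (hs : Subtree s t₀) {c : Clause V} (hc : c ∈ clauses s) : c ∈ φ := by
  have := Multiset.mem_of_le (clauses_le_of_subtree hs) hc
  rwa [hcl, ← Finset.mem_def] at this

lemma disj_P_of_labels {t₀ : PJT V}
    (hdisj : ∀ A B : Finset V, A ::ₘ {B} ≤ labels t₀ → Disjoint A B)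
    {a b : PJT V} (h : labels a + labels b ≤ labels t₀) : Disjoint (P a) (P b) := by
  rw [Finset.disjoint_left]
  intro x hxa hxb
  obtain ⟨lA, csA, hsubA, hxA⟩ := P_mem_label x hxa
  obtain ⟨lB, csB, hsubB, hxB⟩ := P_mem_label x hxb
  have h1 : {lA} ≤ labels a := Multiset.singleton_le.2 (label_mem_labels hsubA)
  have h2 : {lB} ≤ labels b := Multiset.singleton_le.2 (label_mem_labels hsubB)
  have h3 : lA ::ₘ {lB} ≤ labels t₀ := by
    have : ({lA} : Multiset (Finset V)) + {lB} = lA ::ₘ {lB} := by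
      rw [Multiset.singleton_add]
    rw [← this]
    exact le_trans (add_le_add h1 h2) h
  exact absurd hxB (Finset.disjoint_left.1 (hdisj lA lB h3) hxA)

lemma disj_lbl_P {t₀ : PJT V}
    (hdisj : ∀ A B : Finset V, A ::ₘ {B} ≤ labels t₀ → Disjoint A B)
    {lbl : Finset V} {b : PJT V} (h : lbl ::ₘ labels b ≤ labels t₀) : Disjoint lbl (P b) := by
  rw [Finset.disjoint_left]
  intro x hxl hxb
  obtain ⟨lB, csB, hsubB, hxB⟩ := P_mem_label x hxb
  have h2 : lbl ::ₘ {lB} ≤ lbl ::ₘ labels b :=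
    Multiset.cons_le_cons _ (Multiset.singleton_le.2 (label_mem_labels hsubB))
  exact absurd hxB (Finset.disjoint_left.1 (hdisj lbl lB (le_trans h2 h)) hxl)

lemma varsOf_P_disjoint {φ : Finset (Clause V)} {t₀ : PJT V} (hcl : clauses t₀ = φ.val)
    (hdesc : ∀ lbl cs, Subtree (.node lbl cs) t₀ →
      ∀ c ∈ φ, ∀ x ∈ lbl, x ∈ c.vars → c ∈ PJT.clauses (.node lbl cs))
    (hdisj : ∀ A B : Finset V, A ::ₘ {B} ≤ labels t₀ → Disjoint A B) :
    ∀ s : PJT V, Subtree s t₀ → Disjoint (varsOf s) (P s) := by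
  intro s
  induction s using pjt_strong_ind with
  | h t ih =>
    match t with
    | .leaf c' =>
      intro _
      rw [show P (.leaf c' : PJT V) = ∅ from by rw [P]]
      exact Finset.disjoint_empty_right _
    | .node lbl cs =>
      intro hs
      rw [Finset.disjoint_left]
      intro x hxv hxp
      rw [show varsOf (.node lbl cs)
          = (cs.attach.map (fun o => varsOf o.1)).foldr (· ∪ ·) ∅ \ lbl from by rw [varsOf]] at hxv
      rw [Finset.mem_sdiff] at hxv
      obtain ⟨hxf, hxl⟩ := hxv
      obtain ⟨o, _, hxo⟩ := (mem_foldr_union _ _ x).1 hxf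
      obtain ⟨c, hco, hxc⟩ := varsOf_mem_clause x hxo
      have hso : Subtree o.1 t₀ := subtree_trans (.child o.2 (.refl _)) hs
      rw [show P (.node lbl cs)
          = lbl ∪ (cs.attach.map (fun o => P o.1)).foldr (· ∪ ·) ∅ from by rw [P]] at hxp
      rcases Finset.mem_union.1 hxp with h1 | h1
      · exact hxl h1
      · obtain ⟨o', _, hxo'⟩ := (mem_foldr_union _ _ x).1 h1
        by_cases heq : o.1 = o'.1
        · rw [← heq] at hxo'
          exact absurd hxo'
            (Finset.disjoint_left.1 (ih o.1 (sizeOf_child o.2) (subtree_trans (.child o.2 (.refl _)) hs)) hxo)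
        · have hcφ : c ∈ φ := clause_mem_phi hcl hso hco
          have hso' : Subtree o'.1 t₀ := subtree_trans (.child o'.2 (.refl _)) hs
          have hco' : c ∈ clauses o'.1 := key_contain hdesc hso' hxo' hcφ hxc
          have hne : o ≠ o' := fun h => heq (by rw [h])
          have hsum : clauses o.1 + clauses o'.1 ≤ clauses t₀ := by
            refine le_trans ?_ (clauses_le_of_subtree hs)
            rw [show clauses (.node lbl cs)
              = (cs.attach.map (fun o => clauses o.1)).sum from by rw [clauses]]
            exact aux_two_le_sum cs.attach (fun o => clauses o.1)
              (List.mem_attach _ _) (List.mem_attach _ _) hne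
          have hnd : (clauses t₀).Nodup := by rw [hcl]; exact φ.nodup
          exact mem_two_not_nodup hsum hnd hco hco'

end Separation
section Main
variable {V : Type*} [DecidableEq V] {α : Type*}
open PJT

lemma list_prod_mul (l : List α) (f g : α → ℝ) :
    (l.map (fun a => f a * g a)).prod = (l.map f).prod * (l.map g).prod := by
  induction l with
  | nil => simp
  | cons a l ih => simp only [List.map_cons, List.prod_cons, ih]; ring

theorem main_val {φ : Finset (Clause V)} {t₀ : PJT V} (hcl : clauses t₀ = φ.val)
    (hdesc : ∀ lbl cs, Subtree (.node lbl cs) t₀ →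
      ∀ c ∈ φ, ∀ x ∈ lbl, x ∈ c.vars → c ∈ PJT.clauses (.node lbl cs))
    (hdisj : ∀ A B : Finset V, A ::ₘ {B} ≤ labels t₀ → Disjoint A B)
    (W : V → Bool → ℝ) :
    ∀ s : PJT V, Subtree s t₀ → ∀ τ : Finset V, Disjoint τ (P s) →
      val W s τ = ∑ σ ∈ (P s).powerset,
        ((clauses s).map (fun c => c.ind (τ ∪ σ))).prod * wProd W (P s) σ := by
  intro s
  induction s using pjt_strong_ind with
  | h t ih =>
    match t with
    | .leaf c' =>
      intro _ τ _
      rw [show val W (.leaf c') = c'.ind from by rw [val],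
          show P (.leaf c' : PJT V) = ∅ from by rw [P],
          show clauses (.leaf c' : PJT V) = {c'} from by rw [clauses]]
      simp [wProd]
    | .node lbl cs =>
      intro hs τ hτ
      set Q := (cs.attach.map (fun o => P o.1)).foldr (· ∪ ·) ∅ with hQ
      have hPnode : P (.node lbl cs) = lbl ∪ Q := by rw [P, hQ]
      have hlabelsnode : labels (.node lbl cs)
          = lbl ::ₘ (cs.attach.map (fun o => labels o.1)).sum := by rw [labels]
      have hclnode : clauses (.node lbl cs)
          = (cs.attach.map (fun o => clauses o.1)).sum := by rw [clauses]
      have hchild : ∀ o : {x // x ∈ cs}, Subtree o.1 t₀ :=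
        fun o => subtree_trans (.child o.2 (.refl _)) hs
      have hlblP : ∀ o : {x // x ∈ cs}, Disjoint lbl (P o.1) := by
        intro o
        refine disj_lbl_P hdisj (le_trans ?_ (labels_le_of_subtree hs))
        rw [hlabelsnode]
        exact Multiset.cons_le_cons _
          (aux_le_sum cs.attach (fun o => labels o.1) (List.mem_attach _ _))
      have hPP : List.Pairwise (fun a b : {x // x ∈ cs} => Disjoint (P a.1) (P b.1)) cs.attach := by
        refine (aux_pairwise_sum cs.attach (fun o => labels o.1)).imp ?_
        intro a b hab
        refine disj_P_of_labels hdisj (le_trans hab ?_)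
        refine le_trans ?_ (labels_le_of_subtree hs)
        rw [hlabelsnode]
        exact Multiset.le_cons_self _ _
      have hPoQ : ∀ o : {x // x ∈ cs}, P o.1 ⊆ Q :=
        fun o x hx => (mem_foldr_union _ _ x).2 ⟨o, List.mem_attach _ _, hx⟩
      have hQP : Q ⊆ P (.node lbl cs) := by rw [hPnode]; exact Finset.subset_union_right
      have hlblsub : lbl ⊆ P (.node lbl cs) := by rw [hPnode]; exact Finset.subset_union_left
      have hlblQ : Disjoint lbl Q := by
        rw [Finset.disjoint_left]
        intro x hx hx2
        obtain ⟨o, _, hxo⟩ := (mem_foldr_union _ _ x).1 hx2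
        exact Finset.disjoint_left.1 (hlblP o) hx hxo
      have hVPo : ∀ o : {x // x ∈ cs}, Disjoint (varsOf o.1) (P o.1) :=
        fun o => varsOf_P_disjoint hcl hdesc hdisj o.1 (hchild o)
      have hclP : ∀ o : {x // x ∈ cs}, ∀ c ∈ clauses o.1, ∀ x ∈ c.vars, x ∈ Q → x ∈ P o.1 := by
        intro o c hc x hxc hxQ
        obtain ⟨o', _, hxo'⟩ := (mem_foldr_union _ _ x).1 hxQ
        by_cases heq : o.1 = o'.1
        · rw [heq]; exact hxo'
        · exfalso
          have hcφ : c ∈ φ := clause_mem_phi hcl (hchild o) hc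
          have hco' : c ∈ clauses o'.1 := key_contain hdesc (hchild o') hxo' hcφ hxc
          have hne : o ≠ o' := fun h => heq (by rw [h])
          have hsum : clauses o.1 + clauses o'.1 ≤ clauses t₀ := by
            refine le_trans ?_ (clauses_le_of_subtree hs)
            rw [hclnode]
            exact aux_two_le_sum cs.attach (fun o => clauses o.1)
              (List.mem_attach _ _) (List.mem_attach _ _) hne
          exact mem_two_not_nodup hsum (by rw [hcl]; exact φ.nodup) hc hco'
      have key : ∀ σ ∈ lbl.powerset,
          (cs.attach.map (fun o => val W o.1 ((τ ∪ σ) ∩ varsOf o.1))).prod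
          = ∑ ρ ∈ Q.powerset,
              ((clauses (.node lbl cs)).map (fun c => c.ind (τ ∪ σ ∪ ρ))).prod * wProd W Q ρ := by
        intro σ hσ
        rw [Finset.mem_powerset] at hσ
        have hval : ∀ o : {x // x ∈ cs}, o ∈ cs.attach →
            val W o.1 ((τ ∪ σ) ∩ varsOf o.1)
            = ∑ σᵢ ∈ (P o.1).powerset,
                ((clauses o.1).map (fun c => c.ind (τ ∪ σ ∪ σᵢ))).prod * wProd W (P o.1) σᵢ := by
          intro o _
          have hd : Disjoint ((τ ∪ σ) ∩ varsOf o.1) (P o.1) :=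
            ((hVPo o).mono_left Finset.inter_subset_right)
          rw [ih o.1 (sizeOf_child o.2) (hchild o) _ hd]
          refine Finset.sum_congr rfl (fun σᵢ hσᵢ => ?_)
          rw [Finset.mem_powerset] at hσᵢ
          congr 1
          refine congrArg Multiset.prod (Multiset.map_congr rfl (fun c hc => ?_))
          refine ind_congr c (fun x hxc => ?_)
          have hxvp := clause_vars_subset c hc hxc
          simp only [Finset.mem_union, Finset.mem_inter]
          rcases Finset.mem_union.1 hxvp with hv | hp
          · have hnp : x ∉ P o.1 := Finset.disjoint_left.1 (hVPo o) hv
            have hnσᵢ : x ∉ σᵢ := fun h => hnp (hσᵢ h)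
            tauto
          · have hnv : x ∉ varsOf o.1 := fun h => Finset.disjoint_left.1 (hVPo o) h hp
            have hnτ : x ∉ τ := fun h => Finset.disjoint_left.1 hτ h (hQP (hPoQ o hp))
            have hnσ : x ∉ σ := fun h => Finset.disjoint_left.1 (hlblP o) (hσ h) hp
            tauto
        calc (cs.attach.map (fun o => val W o.1 ((τ ∪ σ) ∩ varsOf o.1))).prod
            = (cs.attach.map (fun o : {x // x ∈ cs} => ∑ σᵢ ∈ (P o.1).powerset,
                ((clauses o.1).map (fun c => c.ind (τ ∪ σ ∪ σᵢ))).prod * wProd W (P o.1) σᵢ)).prod :=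
              congrArg List.prod (List.map_congr_left hval)
          _ = ∑ ρ ∈ Q.powerset, (cs.attach.map (fun o : {x // x ∈ cs} =>
                ((clauses o.1).map (fun c => c.ind (τ ∪ σ ∪ (ρ ∩ P o.1)))).prod
                  * wProd W (P o.1) (ρ ∩ P o.1))).prod := by
              rw [hQ]
              exact prod_sum_powerset cs.attach (fun o => P o.1)
                (fun o σᵢ => ((clauses o.1).map (fun c => c.ind (τ ∪ σ ∪ σᵢ))).prod
                  * wProd W (P o.1) σᵢ) hPP
          _ = ∑ ρ ∈ Q.powerset, (cs.attach.map (fun o : {x // x ∈ cs} =>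
                ((clauses o.1).map (fun c => c.ind (τ ∪ σ ∪ ρ))).prod * wProd W (P o.1) ρ)).prod := by
              refine Finset.sum_congr rfl (fun ρ hρ => ?_)
              rw [Finset.mem_powerset] at hρ
              refine congrArg List.prod (List.map_congr_left (fun o _ => ?_))
              congr 1
              · refine congrArg Multiset.prod (Multiset.map_congr rfl (fun c hc => ?_))
                refine ind_congr c (fun x hxc => ?_)
                have himp : x ∈ ρ → x ∈ P o.1 := fun h => hclP o c hc x hxc (hρ h)
                simp only [Finset.mem_union, Finset.mem_inter]
                tauto
              · exact wProd_congr W (fun x hx =>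
                  ⟨fun h => (Finset.mem_inter.1 h).1, fun h => Finset.mem_inter.2 ⟨h, hx⟩⟩)
          _ = ∑ ρ ∈ Q.powerset,
                ((clauses (.node lbl cs)).map (fun c => c.ind (τ ∪ σ ∪ ρ))).prod * wProd W Q ρ := by
              refine Finset.sum_congr rfl (fun ρ hρ => ?_)
              rw [list_prod_mul, hclnode, listsum_map_prod,
                wProd_foldr W cs.attach (fun o => P o.1) ρ hPP, ← hQ]
      rw [show val W (.node lbl cs) τ = ∑ σ ∈ lbl.powerset,
            (cs.attach.map (fun o => val W o.1 ((τ ∪ σ) ∩ varsOf o.1))).prod * wProd W lbl (τ ∪ σ)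
          from by rw [val]]
      calc ∑ σ ∈ lbl.powerset,
            (cs.attach.map (fun o => val W o.1 ((τ ∪ σ) ∩ varsOf o.1))).prod * wProd W lbl (τ ∪ σ)
          = ∑ σ ∈ lbl.powerset, (∑ ρ ∈ Q.powerset,
              ((clauses (.node lbl cs)).map (fun c => c.ind (τ ∪ σ ∪ ρ))).prod * wProd W Q ρ)
                * wProd W lbl (τ ∪ σ) :=
            Finset.sum_congr rfl (fun σ hσ => by rw [key σ hσ])
        _ = ∑ σ ∈ lbl.powerset, ∑ ρ ∈ Q.powerset,
              ((clauses (.node lbl cs)).map (fun c => c.ind (τ ∪ (σ ∪ ρ)))).prod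
                * wProd W (lbl ∪ Q) (σ ∪ ρ) := by
            refine Finset.sum_congr rfl (fun σ hσ => ?_)
            rw [Finset.mem_powerset] at hσ
            rw [Finset.sum_mul]
            refine Finset.sum_congr rfl (fun ρ hρ => ?_)
            rw [Finset.mem_powerset] at hρ
            rw [wProd_union W hlblQ]
            have e1 : τ ∪ σ ∪ ρ = τ ∪ (σ ∪ ρ) := Finset.union_assoc τ σ ρ
            have e2 : wProd W Q (σ ∪ ρ) = wProd W Q ρ := by
              refine wProd_congr W (fun x hx => ?_)
              have : x ∉ σ := fun h => Finset.disjoint_left.1 hlblQ (hσ h) hx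
              simp only [Finset.mem_union]
              tauto
            have e3 : wProd W lbl (σ ∪ ρ) = wProd W lbl (τ ∪ σ) := by
              refine wProd_congr W (fun x hx => ?_)
              have h1 : x ∉ ρ := fun h => Finset.disjoint_left.1 hlblQ hx (hρ h)
              have h2 : x ∉ τ := fun h => Finset.disjoint_left.1 hτ h (hlblsub hx)
              simp only [Finset.mem_union]
              tauto
            rw [e1, e2, e3]
            ring
        _ = ∑ π ∈ (lbl ∪ Q).powerset,
              ((clauses (.node lbl cs)).map (fun c => c.ind (τ ∪ π))).prod
                * wProd W (lbl ∪ Q) π :=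
            (sum_powerset_union (fun π =>
              ((clauses (.node lbl cs)).map (fun c => c.ind (τ ∪ π))).prod
                * wProd W (lbl ∪ Q) π) hlblQ).symm
        _ = ∑ σ ∈ (P (.node lbl cs)).powerset,
              ((clauses (.node lbl cs)).map (fun c => c.ind (τ ∪ σ))).prod
                * wProd W (P (.node lbl cs)) σ := by rw [hPnode]

end Main

/-- Correctness of project-join tree evaluation: the root valuation at the
empty assignment equals the weighted model count
`W(φ) = Σ_{τ ⊆ X} φ(τ)·W(τ)`. -/
theorem pjt_correct {V : Type*} [DecidableEq V]
    (φ : Finset (Clause V)) (t : PJT V) (h : IsPJT φ t) (W : V → Bool → ℝ) :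
    t.val W ∅ = ∑ τ ∈ (Formula.vars φ).powerset,
      (∏ c ∈ φ, c.ind τ) * PJT.wProd W (Formula.vars φ) τ := by
  have hdisj : ∀ A B : Finset V, A ::ₘ {B} ≤ PJT.labels t → Disjoint A B := by
    refine disj_of_card (PJT.labels t) ?_
    rw [h.disjoint_labels, ← h.cover, P_eq_sup_labels]
  have hmain := main_val h.clauses_eq h.descend hdisj W t (.refl t) ∅
    (Finset.disjoint_empty_left _)
  rw [hmain, h.cover, h.clauses_eq]
  refine Finset.sum_congr rfl (fun σ _ => ?_)
  congr 1
  rw [Finset.prod_eq_multiset_prod]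
  refine congrArg Multiset.prod (Multiset.map_congr rfl (fun c _ => ?_))
  rw [Finset.empty_union]
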